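/- Let R be a noetherian H-UFD and let E(R) be the multiplicative set generated by the prime H-eigenvectors of R together with the units. Then every nonzero H-stable ideal of R meets E(R); consequently, the localization R[E(R)^{-1}] is H-simple (its only H-stable ideals are 0 and itself). -/

import Mathlib

/-- A normal element `p` of a ring: `Rp = pR`. -/
def IsNormalElem {R : Type*} [Ring R] (p : R) : Prop :=
  (∀ r : R, ∃ r' : R, r * p = p * r') ∧ (∀ r : R, ∃ r' : R, p * r = r' * p)

/-- A prime element of a domain: a nonzero normal element generating a completely
prime ideal `Rp`. -/
def IsPrimeElem {R : Type*} [Ring R] (p : R) : Prop :=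
  p ≠ 0 ∧ IsNormalElem p ∧
    ∀ a b : R, (∃ r : R, a * b = r * p) → (∃ r : R, a = r * p) ∨ (∃ r : R, b = r * p)

/-- An `H`-eigenvector of a `K`-algebra `R` with `H` acting by automorphisms. -/
def IsHEigenvector (K : Type*) {R : Type*} (H : Type*) [CommSemiring K] [Ring R]
    [Algebra K R] [Monoid H] [MulSemiringAction H R] (x : R) : Prop :=
  x ≠ 0 ∧ ∀ h : H, ∃ c : K, h • x = c • x

/-- An `H`-stable two-sided ideal. -/
def TwoSidedIdeal.HStable {R : Type*} (H : Type*) [Ring R] [Monoid H]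
    [MulSemiringAction H R] (I : TwoSidedIdeal R) : Prop :=
  ∀ (h : H) (r : R), r ∈ I → h • r ∈ I

/-- An `H`-prime ideal: a proper `H`-stable ideal `P` with `IJ ⊆ P → I ⊆ P ∨ J ⊆ P`
for all `H`-stable ideals `I`, `J`. -/
def TwoSidedIdeal.IsHPrime {R : Type*} (H : Type*) [Ring R] [Monoid H]
    [MulSemiringAction H R] (P : TwoSidedIdeal R) : Prop :=
  P.HStable H ∧ P ≠ ⊤ ∧
    ∀ I J : TwoSidedIdeal R, I.HStable H → J.HStable H →
      (∀ a ∈ I, ∀ b ∈ J, a * b ∈ P) → I ≤ P ∨ J ≤ P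

/-- `R` is an `H`-UFD: every nonzero `H`-prime ideal contains a prime `H`-eigenvector. -/
def IsHUFD (K : Type*) (R H : Type*) [CommSemiring K] [Ring R] [Algebra K R]
    [Monoid H] [MulSemiringAction H R] : Prop :=
  ∀ P : TwoSidedIdeal R, P.IsHPrime H → P ≠ ⊥ →
    ∃ p ∈ P, IsPrimeElem p ∧ IsHEigenvector K H p


/-- In a noetherian `H`-UFD, every nonzero `H`-stable ideal meets the
multiplicative set `E(R)` generated by the prime `H`-eigenvectors and the units;
consequently the Ore localization `R[E(R)⁻¹]` is `H`-simple (every two-sided ideal of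
the localization whose contraction to `R` is `H`-stable is `0` or everything). -/
theorem hstable_ideal_meets_E_and_localization_H_simple
    (K R H : Type*) [Field K] [Ring R] [IsDomain R] [Algebra K R] [IsNoetherianRing R]
    [Group H] [MulSemiringAction H R] (hufd : IsHUFD K R H)
    (E : Submonoid R)
    (hE : E = Submonoid.closure
      ({p : R | IsPrimeElem p ∧ IsHEigenvector K H p} ∪ {u : R | IsUnit u}))
    [OreLocalization.OreSet E] :
    (∀ I : TwoSidedIdeal R, I.HStable H → I ≠ ⊥ → ∃ e ∈ E, e ∈ I) ∧
    (∀ J : TwoSidedIdeal (OreLocalization E R),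
      (∀ (h : H) (r : R), OreLocalization.numeratorRingHom r ∈ J →
        OreLocalization.numeratorRingHom (h • r) ∈ J) →
      J = ⊥ ∨ J = ⊤) := by
  -- an order embedding of two-sided ideals into left ideals, for noetherianity
  have emb : TwoSidedIdeal R ↪o Ideal R :=
    { toFun := TwoSidedIdeal.asIdeal
      inj' := fun I J h => by
        ext x
        rw [← TwoSidedIdeal.mem_asIdeal, h, TwoSidedIdeal.mem_asIdeal]
      map_rel_iff' := by
        intro I J
        constructor
        · intro h x hx
          exact TwoSidedIdeal.mem_asIdeal.mp
            (h (TwoSidedIdeal.mem_asIdeal.mpr hx))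
        · intro h x hx
          exact TwoSidedIdeal.mem_asIdeal.mpr
            (TwoSidedIdeal.asIdeal.monotone h hx) }
  have hwf : WellFoundedGT (TwoSidedIdeal R) := emb.wellFoundedGT
  -- Part 1
  have part1 : ∀ I : TwoSidedIdeal R, I.HStable H → I ≠ ⊥ → ∃ e ∈ E, e ∈ I := by
    intro I hIstab hIne
    by_contra hcon
    push_neg at hcon
    set S : Set (TwoSidedIdeal R) :=
      {J | I ≤ J ∧ J.HStable H ∧ ∀ e ∈ E, e ∉ J} with hS
    obtain ⟨M, ⟨hIM, hMstab, hME⟩, hmax⟩ :=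
      hwf.wf.has_min S ⟨I, le_refl I, hIstab, hcon⟩
    -- M is H-prime
    have hMne_top : M ≠ ⊤ := by
      intro h
      exact hME 1 E.one_mem (h ▸ TwoSidedIdeal.mem_top _)
    have hMprime : M.IsHPrime H := by
      refine ⟨hMstab, hMne_top, ?_⟩
      intro A B hA hB hAB
      by_contra hc
      push_neg at hc
      obtain ⟨hAM, hBM⟩ := hc
      -- M ⊔ A and M ⊔ B are H-stable, strictly bigger than M, contain I
      have stab_sup : ∀ C : TwoSidedIdeal R, C.HStable H → (M ⊔ C).HStable H := by
        intro C hC h x hx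
        rw [TwoSidedIdeal.mem_sup] at hx ⊢
        obtain ⟨y, hy, z, hz, rfl⟩ := hx
        exact ⟨h • y, hMstab h y hy, h • z, hC h z hz, (smul_add h y z).symm⟩
      have meets : ∀ C : TwoSidedIdeal R, C.HStable H → ¬ C ≤ M →
          ∃ e ∈ E, e ∈ M ⊔ C := by
        intro C hC hCM
        by_contra hno
        push_neg at hno
        refine hmax (M ⊔ C) ⟨le_trans hIM le_sup_left, stab_sup C hC, hno⟩ ?_
        rw [lt_iff_le_and_ne]
        refine ⟨le_sup_left, fun h => ?_⟩
        obtain ⟨c, hcC, hcM⟩ := SetLike.not_le_iff_exists.mp hCM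
        exact hcM (h ▸ TwoSidedIdeal.mem_sup_right hcC)
      obtain ⟨e, heE, heM⟩ := meets A hA hAM
      obtain ⟨f, hfE, hfM⟩ := meets B hB hBM
      rw [TwoSidedIdeal.mem_sup] at heM hfM
      obtain ⟨m, hm, a, ha, rfl⟩ := heM
      obtain ⟨m', hm', b, hb, rfl⟩ := hfM
      have hef : (m + a) * (m' + b) ∈ M := by
        have h1 : m * (m' + b) ∈ M := M.mul_mem_right _ _ hm
        have h2 : a * m' ∈ M := M.mul_mem_left _ _ hm'
        have h3 : a * b ∈ M := hAB a ha b hb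
        have : (m + a) * (m' + b) = m * (m' + b) + (a * m' + a * b) := by
          rw [add_mul, mul_add a]
        rw [this]
        exact M.add_mem h1 (M.add_mem h2 h3)
      exact hME _ (E.mul_mem heE hfE) hef
    have hMne_bot : M ≠ ⊥ := by
      intro h
      exact hIne (le_bot_iff.mp (h ▸ hIM))
    obtain ⟨p, hpM, hpp, hpe⟩ := hufd M hMprime hMne_bot
    have hpE : p ∈ E := by
      rw [hE]
      exact Submonoid.subset_closure (Or.inl ⟨hpp, hpe⟩)
    exact hME p hpE hpM
  refine ⟨part1, ?_⟩
  intro J hJ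
  by_cases hbot : J = ⊥
  · exact Or.inl hbot
  right
  set I : TwoSidedIdeal R := J.comap (OreLocalization.numeratorRingHom (S := E)) with hI
  have hmemI : ∀ r : R, r ∈ I ↔ OreLocalization.numeratorRingHom r ∈ J := by
    intro r
    exact TwoSidedIdeal.mem_comap _
  have hIstab : I.HStable H := by
    intro h r hr
    rw [hmemI] at hr ⊢
    exact hJ h r hr
  have hIne : I ≠ ⊥ := by
    -- find a nonzero element of J
    have : ∃ x, x ∈ J ∧ x ≠ 0 := by
      by_contra hc
      push_neg at hc
      refine hbot (le_bot_iff.mp ?_)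
      intro x hx
      rw [TwoSidedIdeal.mem_bot]
      exact hc x hx
    obtain ⟨x, hxJ, hxne⟩ := this
    induction x using OreLocalization.ind with
    | _ r s =>
      have hrne : r ≠ 0 := by
        rintro rfl
        exact hxne (OreLocalization.zero_oreDiv' s)
      have hr1 : OreLocalization.numeratorRingHom (S := E) r ∈ J := by
        have key : ((s : R) /ₒ (1 : E)) * (r /ₒ s) = r /ₒ (1 : E) :=
          OreLocalization.mul_cancel
        have : OreLocalization.numeratorRingHom (S := E) r = r /ₒ (1 : E) := rfl
        rw [this, ← key]
        exact J.mul_mem_left _ _ hxJ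
      intro hIbot
      have : r ∈ I := (hmemI r).mpr hr1
      rw [hIbot, TwoSidedIdeal.mem_bot] at this
      exact hrne this
  obtain ⟨e, heE, heI⟩ := part1 I hIstab hIne
  have he1 : (e /ₒ (1 : E)) ∈ J := (hmemI e).mp heI
  have hone : (1 : OreLocalization E R) ∈ J := by
    have key : ((((1 : E) : R)) /ₒ (⟨e, heE⟩ : E)) * ((((⟨e, heE⟩ : E) : R)) /ₒ (1 : E))
        = 1 := OreLocalization.mul_inv (1 : E) (⟨e, heE⟩ : E)
    rw [← key]
    exact J.mul_mem_left _ _ he1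
  exact TwoSidedIdeal.one_mem_iff J |>.mp hone
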